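/- arXiv:2505.23623 — 2 statements merged into one kernel-verified Lean document; each statement's English description precedes it below -/
import Mathlib

section
/- Let Σ be an alphabet containing two distinct symbols a and b. The language (ab)* (the Dyck language over one pair of parentheses with nesting depth limited to 1) is not PTL-definable. -/
/-- PTL formulas over alphabet `α`: atoms, conjunction, negation, and the past operator. -/
inductive PTL (α : Type*) : Type _
  | atom : α → PTL α
  | conj : PTL α → PTL α → PTL α
  | neg : PTL α → PTL α
  | past : PTL α → PTL α

/-- Satisfaction of a PTL formula in string `w` at (1-based) position `n ∈ {1,…,N+1}`. -/
def PTL.Sat {α : Type*} (w : List α) : PTL α → ℕ → Prop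
  | .atom a, n => 1 ≤ n ∧ w[n - 1]? = some a
  | .conj ψ₁ ψ₂, n => PTL.Sat w ψ₁ n ∧ PTL.Sat w ψ₂ n
  | .neg ψ, n => ¬ PTL.Sat w ψ n
  | .past ψ, n => ∃ m, 1 ≤ m ∧ m < n ∧ PTL.Sat w ψ m

/-- A string `w` of length `N` satisfies `ψ` iff `w, N+1 ⊨ ψ`. -/
def PTL.Models {α : Type*} (w : List α) (ψ : PTL α) : Prop :=
  PTL.Sat w ψ (w.length + 1)

/-- A language is PTL-definable if it is the set of strings satisfying some PTL formula. -/
def PTLDefinable {α : Type*} (L : Set (List α)) : Prop :=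
  ∃ ψ : PTL α, ∀ w : List α, w ∈ L ↔ PTL.Models w ψ

/-- `listPow w k` is the `k`-fold concatenation `w^k`. -/
def listPow {α : Type*} (w : List α) : ℕ → List α
  | 0 => []
  | k + 1 => w ++ listPow w k

/-- P-nesting depth of a PTL formula. -/
def PTL.depth {α : Type*} : PTL α → ℕ
  | .atom _ => 0
  | .conj ψ₁ ψ₂ => max ψ₁.depth ψ₂.depth
  | .neg ψ => ψ.depth
  | .past ψ => ψ.depth + 1

lemma listPow_length {α : Type*} (a b : α) : ∀ n, (listPow [a, b] n).length = 2 * n := by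
  intro n
  induction n with
  | zero => rfl
  | succ k ih => simp [listPow, ih]; omega

lemma listPow_get {α : Type*} (a b : α) :
    ∀ n i, i < 2 * n → (listPow [a, b] n)[i]? = some (if i % 2 = 0 then a else b) := by
  intro n
  induction n with
  | zero => omega
  | succ k ih =>
    intro i hi
    show ((a :: b :: listPow [a, b] k))[i]? = _
    match i with
    | 0 => rfl
    | 1 => simp
    | (j + 2) =>
      have e : (j + 2) % 2 = j % 2 := by omega
      rw [e, List.getElem?_cons_succ, List.getElem?_cons_succ]
      exact ih j (by omega)

/-- Satisfaction at position `m ≤ M` only depends on the first `M` letters. -/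
lemma sat_prefix {α : Type*} {u v : List α} {M : ℕ} (h : ∀ i, i < M → u[i]? = v[i]?) :
    ∀ (φ : PTL α), ∀ m ≤ M, (PTL.Sat u φ m ↔ PTL.Sat v φ m) := by
  intro φ
  induction φ with
  | atom c =>
    intro m hm
    simp only [PTL.Sat]
    constructor <;> rintro ⟨h1, h2⟩ <;> refine ⟨h1, ?_⟩
    · rw [← h (m - 1) (by omega)]; exact h2
    · rw [h (m - 1) (by omega)]; exact h2
  | conj p q ihp ihq =>
    intro m hm
    simp only [PTL.Sat]
    rw [ihp m hm, ihq m hm]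
  | neg p ih =>
    intro m hm
    simp only [PTL.Sat]
    rw [ih m hm]
  | past p ih =>
    intro m hm
    simp only [PTL.Sat]
    constructor <;> rintro ⟨k, h1, h2, h3⟩
    · exact ⟨k, h1, h2, (ih k (by omega)).mp h3⟩
    · exact ⟨k, h1, h2, (ih k (by omega)).mpr h3⟩

/-- In a word whose first `2n` letters follow the periodic pattern `abab…`, satisfaction
at deep-enough positions is invariant under shifting by 2. -/
lemma sat_shift {α : Type*} {a b : α} {W : List α} {n : ℕ}
    (hW : ∀ i, i < 2 * n → W[i]? = some (if i % 2 = 0 then a else b)) :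
    ∀ (φ : PTL α), ∀ m, 2 * φ.depth + 3 ≤ m → m + 2 ≤ 2 * n →
      (PTL.Sat W φ m ↔ PTL.Sat W φ (m + 2)) := by
  intro φ
  induction φ with
  | atom c =>
    intro m hm hn
    have e : (m - 1) % 2 = (m + 2 - 1) % 2 := by omega
    simp only [PTL.Sat, hW (m - 1) (by omega), hW (m + 2 - 1) (by omega), ← e]
    constructor <;> rintro ⟨h1, h2⟩ <;> exact ⟨by omega, h2⟩
  | conj p q ihp ihq =>
    intro m hm hn
    simp only [PTL.Sat, PTL.depth] at hm ⊢
    rw [ihp m (by omega) hn, ihq m (by omega) hn]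
  | neg p ih =>
    intro m hm hn
    simp only [PTL.Sat, PTL.depth] at hm ⊢
    rw [ih m (by omega) hn]
  | past p ih =>
    intro m hm hn
    simp only [PTL.Sat, PTL.depth] at hm ⊢
    constructor <;> rintro ⟨k, h1, h2, h3⟩
    · exact ⟨k, h1, by omega, h3⟩
    · by_cases hk : k < m
      · exact ⟨k, h1, hk, h3⟩
      · have hk2 : k - 2 + 2 = k := by omega
        have := ih (k - 2) (by omega) (by omega)
        rw [hk2] at this
        exact ⟨k - 2, by omega, by omega, this.mpr h3⟩

/-- Pulling the position `2n+1` down to `2n-1` in a word with periodic prefix `(ab)^n`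
whose `(2n+1)`-st letter is `a`. -/
lemma sat_pull {α : Type*} {a b : α} {W : List α} {n : ℕ}
    (hW : ∀ i, i < 2 * n → W[i]? = some (if i % 2 = 0 then a else b))
    (hWa : W[2 * n]? = some a) :
    ∀ (φ : PTL α), 2 * φ.depth + 6 ≤ 2 * n →
      (PTL.Sat W φ (2 * n + 1) ↔ PTL.Sat W φ (2 * n - 1)) := by
  intro φ
  induction φ with
  | atom c =>
    intro hd
    have e1 : 2 * n + 1 - 1 = 2 * n := by omega
    have e2 : W[2 * n - 1 - 1]? = some a := by
      rw [hW (2 * n - 1 - 1) (by omega)]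
      have : (2 * n - 1 - 1) % 2 = 0 := by omega
      rw [this]
      simp
    simp only [PTL.Sat, e1, hWa, e2]
    constructor <;> rintro ⟨h1, h2⟩ <;> exact ⟨by omega, h2⟩
  | conj p q ihp ihq =>
    intro hd
    simp only [PTL.Sat, PTL.depth] at hd ⊢
    rw [ihp (by omega), ihq (by omega)]
  | neg p ih =>
    intro hd
    simp only [PTL.Sat, PTL.depth] at hd ⊢
    rw [ih (by omega)]
  | past p ih =>
    intro hd
    simp only [PTL.Sat, PTL.depth] at hd ⊢
    constructor <;> rintro ⟨k, h1, h2, h3⟩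
    · by_cases hk : k < 2 * n - 1
      · exact ⟨k, h1, hk, h3⟩
      · -- k ∈ {2n-1, 2n}; shift down by 2
        have hk2 : k - 2 + 2 = k := by omega
        have := sat_shift hW p (k - 2) (by omega) (by omega)
        rw [hk2] at this
        exact ⟨k - 2, by omega, by omega, this.mpr h3⟩
    · exact ⟨k, h1, by omega, h3⟩

/-- The words `(ab)^n` and `(ab)^n · a` satisfy the same formulas of small depth. -/
lemma sat_end {α : Type*} (a b : α) (n : ℕ) :
    ∀ (φ : PTL α), 2 * φ.depth + 8 ≤ 2 * n →
      (PTL.Sat (listPow [a, b] n) φ (2 * n + 1) ↔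
        PTL.Sat (listPow [a, b] n ++ [a]) φ (2 * n + 2)) := by
  set w1 := listPow [a, b] n with hw1
  set w3 := listPow [a, b] n ++ [a] with hw3
  have hlen1 : w1.length = 2 * n := listPow_length a b n
  have hlen3 : w3.length = 2 * n + 1 := by simp [hw3, hlen1, listPow_length]
  have hpre : ∀ i, i < 2 * n → w1[i]? = w3[i]? := by
    intro i hi
    rw [hw3, List.getElem?_append]
    simp [hw1, hlen1, hi, listPow_length]
  have hW3 : ∀ i, i < 2 * n → w3[i]? = some (if i % 2 = 0 then a else b) := by
    intro i hi
    rw [← hpre i hi]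
    exact listPow_get a b n i hi
  have hW3a : w3[2 * n]? = some a := by
    rw [hw3, List.getElem?_append]
    simp [hlen1, listPow_length]
  intro φ
  induction φ with
  | atom c =>
    intro hd
    have e1 : w1[2 * n + 1 - 1]? = none := List.getElem?_eq_none (by omega)
    have e2 : w3[2 * n + 2 - 1]? = none := List.getElem?_eq_none (by omega)
    simp only [PTL.Sat, e1, e2]
    simp
  | conj p q ihp ihq =>
    intro hd
    simp only [PTL.Sat, PTL.depth] at hd ⊢
    rw [ihp (by omega), ihq (by omega)]
  | neg p ih =>
    intro hd
    simp only [PTL.Sat, PTL.depth] at hd ⊢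
    rw [ih (by omega)]
  | past p ih =>
    intro hd
    simp only [PTL.Sat, PTL.depth] at hd ⊢
    constructor <;> rintro ⟨k, h1, h2, h3⟩
    · exact ⟨k, h1, by omega, (sat_prefix hpre p k (by omega)).mp h3⟩
    · by_cases hk : k ≤ 2 * n
      · exact ⟨k, h1, by omega, (sat_prefix hpre p k hk).mpr h3⟩
      · -- k = 2n + 1
        have hk1 : k = 2 * n + 1 := by omega
        rw [hk1] at h3
        have h4 : PTL.Sat w3 p (2 * n - 1) := (sat_pull hW3 hW3a p (by omega)).mp h3
        have h5 : PTL.Sat w1 p (2 * n - 1) := (sat_prefix hpre p (2 * n - 1) (by omega)).mpr h4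
        exact ⟨2 * n - 1, by omega, by omega, h5⟩

/-- The language `(ab)*` is not PTL-definable. -/
theorem dyck11_not_ptl {α : Type*} [Fintype α] (a b : α) (hab : a ≠ b) :
    ¬ PTLDefinable {w : List α | ∃ k : ℕ, w = listPow [a, b] k} := by
  rintro ⟨ψ, hψ⟩
  set n := ψ.depth + 4 with hn
  set w1 := listPow [a, b] n with hw1
  set w3 := listPow [a, b] n ++ [a] with hw3
  have hlen1 : w1.length = 2 * n := listPow_length a b n
  have hlen3 : w3.length = 2 * n + 1 := by simp [hw3, hlen1, listPow_length]
  have h1 : PTL.Models w1 ψ := (hψ w1).mp ⟨n, rfl⟩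
  have h2 : PTL.Models w3 ψ := by
    unfold PTL.Models
    rw [hlen3]
    unfold PTL.Models at h1
    rw [hlen1] at h1
    have := sat_end a b n ψ (by omega)
    rw [← hw1, ← hw3] at this
    exact (this.mp h1)
  obtain ⟨k, hk⟩ := (hψ w3).mpr h2
  have : w3.length = 2 * k := by rw [hk, listPow_length]
  omega
end

section
/- Every PTL-definable language over a finite alphabet Σ is star-free, i.e., it can be generated from ∅ and the singleton languages {a} (a ∈ Σ) by finitely many applications of union, concatenation, and complement, without using the Kleene star. -/
/-- Star-free languages: generated from `∅` and the singletons `{a}` by union,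
concatenation, and complement (no Kleene star). -/
inductive StarFree {α : Type*} : Set (List α) → Prop
  | empty : StarFree (∅ : Set (List α))
  | single (a : α) : StarFree {[a]}
  | union {L₁ L₂ : Set (List α)} : StarFree L₁ → StarFree L₂ → StarFree (L₁ ∪ L₂)
  | concat {L₁ L₂ : Set (List α)} : StarFree L₁ → StarFree L₂ →
      StarFree {w | ∃ u ∈ L₁, ∃ v ∈ L₂, w = u ++ v}
  | compl {L : Set (List α)} : StarFree L → StarFree Lᶜ

/- Auxiliary lemmas -/

lemma sf_congr {α : Type*} {L L' : Set (List α)} (h : StarFree L) (e : L = L') :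
    StarFree L' := e ▸ h

lemma sf_univ {α : Type*} : StarFree (Set.univ : Set (List α)) :=
  sf_congr (StarFree.compl StarFree.empty) (by simp)

lemma sf_inter {α : Type*} {L₁ L₂ : Set (List α)} (h₁ : StarFree L₁) (h₂ : StarFree L₂) :
    StarFree (L₁ ∩ L₂) :=
  sf_congr (StarFree.compl (StarFree.union h₁.compl h₂.compl)) (by
    rw [Set.compl_union, compl_compl, compl_compl])

lemma sf_nonempty {α : Type*} [Fintype α] : StarFree {w : List α | w ≠ []} := by
  classical
  have key : ∀ s : Finset α, StarFree {w : List α | ∃ a ∈ s, ∃ v, w = a :: v} := by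
    intro s
    induction s using Finset.induction_on with
    | empty => exact sf_congr StarFree.empty (by simp)
    | @insert b s hbs ih =>
      refine sf_congr (StarFree.union
        (StarFree.concat (StarFree.single b : StarFree ({[b]} : Set (List α))) (sf_univ)) ih) ?_
      ext w
      simp only [Set.mem_union, Set.mem_setOf_eq, Set.mem_singleton_iff, Set.mem_univ,
        Finset.mem_insert]
      constructor
      · rintro (⟨u, rfl, v, -, rfl⟩ | ⟨a, ha, v, rfl⟩)
        · exact ⟨b, Or.inl rfl, v, rfl⟩
        · exact ⟨a, Or.inr ha, v, rfl⟩
      · rintro ⟨a, (rfl | ha), v, rfl⟩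
        · exact Or.inl ⟨[a], rfl, v, trivial, rfl⟩
        · exact Or.inr ⟨a, ha, v, rfl⟩
  refine sf_congr (key Finset.univ) ?_
  ext w
  cases w with
  | nil => simp
  | cons a v =>
    simp only [Set.mem_setOf_eq, Finset.mem_univ, true_and, ne_eq]
    constructor
    · rintro -; simp
    · rintro -; exact ⟨a, v, rfl⟩

/-- `Sat` at position `n` only depends on the first `k ≥ n` letters. -/
lemma sat_take {α : Type*} (ψ : PTL α) : ∀ (w : List α) (n k : ℕ), n ≤ k →
    (PTL.Sat w ψ n ↔ PTL.Sat (w.take k) ψ n) := by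
  induction ψ with
  | atom a =>
    intro w n k hnk
    simp only [PTL.Sat]
    constructor
    · rintro ⟨h1, h2⟩
      refine ⟨h1, ?_⟩
      rw [List.getElem?_take, if_pos (by omega)]; exact h2
    · rintro ⟨h1, h2⟩
      refine ⟨h1, ?_⟩
      rw [List.getElem?_take, if_pos (by omega)] at h2; exact h2
  | conj ψ₁ ψ₂ ih₁ ih₂ =>
    intro w n k hnk
    simp only [PTL.Sat]
    rw [ih₁ w n k hnk, ih₂ w n k hnk]
  | neg ψ ih =>
    intro w n k hnk
    simp only [PTL.Sat]
    rw [ih w n k hnk]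
  | past ψ ih =>
    intro w n k hnk
    simp only [PTL.Sat]
    constructor
    · rintro ⟨m, h1, h2, h3⟩
      exact ⟨m, h1, h2, (ih w m k (by omega)).mp h3⟩
    · rintro ⟨m, h1, h2, h3⟩
      exact ⟨m, h1, h2, (ih w m k (by omega)).mpr h3⟩

lemma sat_append {α : Type*} (ψ : PTL α) (u v : List α) (n : ℕ) (h : n ≤ u.length) :
    PTL.Sat (u ++ v) ψ n ↔ PTL.Sat u ψ n := by
  rw [sat_take ψ (u ++ v) n n le_rfl, sat_take ψ u n n le_rfl,
    List.take_append_of_le_length h]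

/-- The main simultaneous induction. -/
lemma main_lemma {α : Type*} [Fintype α] (ψ : PTL α) :
    StarFree {w : List α | w ≠ [] ∧ PTL.Sat w ψ w.length} ∧
    StarFree {w : List α | PTL.Sat w ψ (w.length + 1)} := by
  induction ψ with
  | atom a =>
    constructor
    · refine sf_congr (StarFree.concat sf_univ (StarFree.single a)) ?_
      ext w
      simp only [Set.mem_setOf_eq, Set.mem_univ, Set.mem_singleton_iff, PTL.Sat]
      constructor
      · rintro ⟨u, -, v, rfl, rfl⟩
        refine ⟨by simp, by simp, ?_⟩
        simp
      · rintro ⟨hne, h1, h2⟩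
        refine ⟨w.dropLast, trivial, [w.getLast hne], ?_, (List.dropLast_append_getLast hne).symm⟩
        have : w.getLast? = some a := by
          rw [List.getLast?_eq_getElem?]; exact h2
        rw [List.getLast?_eq_getLast hne] at this
        simp [Option.some.injEq] at this
        rw [this]
    · refine sf_congr StarFree.empty ?_
      ext w
      simp [PTL.Sat]
  | conj ψ₁ ψ₂ ih₁ ih₂ =>
    constructor
    · refine sf_congr (sf_inter ih₁.1 ih₂.1) ?_
      ext w; simp only [Set.mem_inter_iff, Set.mem_setOf_eq, PTL.Sat]; try tauto
    · refine sf_congr (sf_inter ih₁.2 ih₂.2) ?_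
      ext w; simp only [Set.mem_inter_iff, Set.mem_setOf_eq, PTL.Sat]; try tauto
  | neg ψ ih =>
    constructor
    · refine sf_congr (sf_inter sf_nonempty ih.1.compl) ?_
      ext w
      simp only [Set.mem_inter_iff, Set.mem_setOf_eq, Set.mem_compl_iff, PTL.Sat]
      tauto
    · refine sf_congr ih.2.compl ?_
      ext w
      simp [PTL.Sat]
  | past ψ ih =>
    constructor
    · refine sf_congr (StarFree.concat ih.1 sf_nonempty) ?_
      ext w
      simp only [Set.mem_setOf_eq, PTL.Sat]
      constructor
      · rintro ⟨u, ⟨hu, hsat⟩, v, hv, rfl⟩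
        refine ⟨by simp [hu], u.length, ?_, ?_, ?_⟩
        · have : u.length ≠ 0 := fun h => hu (List.length_eq_zero_iff.mp h)
          omega
        · have : v.length ≠ 0 := fun h => hv (List.length_eq_zero_iff.mp h)
          simp; omega
        · exact (sat_append ψ u v u.length le_rfl).mpr hsat
      · rintro ⟨hne, m, h1, h2, h3⟩
        refine ⟨w.take m, ⟨?_, ?_⟩, w.drop m, ?_, (List.take_append_drop m w).symm⟩
        · simp only [ne_eq, List.take_eq_nil_iff]
          push_neg
          constructor <;> [skip; exact hne]
          omega
        · have hlen : (w.take m).length = m := by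
            simp; omega
          rw [hlen]
          exact (sat_take ψ w m m le_rfl).mp h3
        · simp only [ne_eq, List.drop_eq_nil_iff]
          omega
    · refine sf_congr (StarFree.concat ih.1 sf_univ) ?_
      ext w
      simp only [Set.mem_setOf_eq, Set.mem_univ, PTL.Sat]
      constructor
      · rintro ⟨u, ⟨hu, hsat⟩, v, -, rfl⟩
        refine ⟨u.length, ?_, ?_, ?_⟩
        · have : u.length ≠ 0 := fun h => hu (List.length_eq_zero_iff.mp h)
          omega
        · simp
        · exact (sat_append ψ u v u.length le_rfl).mpr hsat
      · rintro ⟨m, h1, h2, h3⟩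
        refine ⟨w.take m, ⟨?_, ?_⟩, w.drop m, trivial, (List.take_append_drop m w).symm⟩
        · simp only [ne_eq, List.take_eq_nil_iff]
          push_neg
          constructor
          · omega
          · intro h; rw [h] at h2; simp at h2; omega
        · have hlen : (w.take m).length = m := by
            simp; omega
          rw [hlen]
          exact (sat_take ψ w m m le_rfl).mp h3

/-- Every PTL-definable language over a finite alphabet is star-free. -/
theorem ptl_definable_star_free {α : Type*} [Fintype α] (L : Set (List α))
    (h : PTLDefinable L) :
    StarFree L := by
  obtain ⟨ψ, hψ⟩ := h
  have : L = {w : List α | PTL.Sat w ψ (w.length + 1)} := by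
    ext w; exact hψ w
  rw [this]
  exact (main_lemma ψ).2
end
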